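/- Let E be a functional on a complete metric space (X,d) admitting EVI_λ gradient flows from every point, with semigroup S and slope |∂E| satisfying the monotonicity t ↦ e^{λt}|∂E|(S_t x) nonincreasing and the dissipation identity E(S_a x) − E(S_b x) = ∫_a^b |∂E|²(S_τ x) dτ for 0 < a ≤ b. Then for 0 < s < h: E(S_h x) − E(S_s x) ≤ (1/(2λ))(1 − e^{2λ(h−s)}) |∂E|²(S_h x) (interpreting (1/(2λ))(1 − e^{2λu}) as −u when λ = 0). -/

import Mathlib

open MeasureTheory

lemma exp_int_aux (c s h : ℝ) (hc : c ≠ 0) :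
    ∫ τ in s..h, Real.exp (c * (h - τ)) = (Real.exp (c * (h - s)) - 1) / c := by
  have hd : ∀ τ ∈ Set.uIcc s h, HasDerivAt (fun τ => -(1 / c) * Real.exp (c * (h - τ)))
      (Real.exp (c * (h - τ))) τ := by
    intro τ _
    have h1 : HasDerivAt (fun τ : ℝ => c * (h - τ)) (-c) τ := by
      simpa using ((hasDerivAt_const τ h).sub (hasDerivAt_id τ)).const_mul c
    have := (h1.exp).const_mul (-(1 / c))
    refine this.congr_deriv ?_
    have hcc : c / c = 1 := div_self hc
    linear_combination (Real.exp (c * (h - τ))) * hcc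
  rw [intervalIntegral.integral_eq_sub_of_hasDerivAt hd
    ((Real.continuous_exp.comp (by continuity)).intervalIntegrable s h)]
  field_simp
  rw [sub_self, mul_zero, Real.exp_zero]
  ring

/-- given the monotonicity `t ↦ e^{λt}|∂E|(S_t x)` nonincreasing and the
dissipation identity `E(S_a x) − E(S_b x) = ∫_a^b |∂E|²(S_τ x) dτ` along the flow,
for `0 < s < h` one has
`E(S_h x) − E(S_s x) ≤ (1/(2λ))(1 − e^{2λ(h−s)}) |∂E|²(S_h x)`
(read as `−(h−s)|∂E|²(S_h x)` when `λ = 0`). Here `slope = |∂E|`. -/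
theorem stmt16 {X : Type*} [MetricSpace X] (E slope : X → ℝ) (S : ℝ → X → X)
    (lam : ℝ) (x : X)
    (hslope0 : ∀ z : X, 0 ≤ slope z)
    (hmono : ∀ s t : ℝ, 0 < s → s ≤ t →
      Real.exp (lam * t) * slope (S t x) ≤ Real.exp (lam * s) * slope (S s x))
    (hint : ∀ a b : ℝ, 0 < a → a ≤ b →
      IntervalIntegrable (fun τ => slope (S τ x) ^ 2) volume a b)
    (hdiss : ∀ a b : ℝ, 0 < a → a ≤ b →
      E (S a x) - E (S b x) = ∫ τ in a..b, slope (S τ x) ^ 2) :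
    ∀ s h : ℝ, 0 < s → s < h →
      E (S h x) - E (S s x) ≤
        (if lam = 0 then -((h - s) * slope (S h x) ^ 2)
          else (1 / (2 * lam)) * (1 - Real.exp (2 * lam * (h - s))) * slope (S h x) ^ 2) := by
  intro s h hs hsh
  have hsh' : s ≤ h := hsh.le
  set C := slope (S h x) ^ 2 with hC
  have key : ∀ τ ∈ Set.Icc s h,
      Real.exp (2 * lam * (h - τ)) * C ≤ slope (S τ x) ^ 2 := by
    intro τ hτ
    have hτs : 0 < τ := hs.trans_le hτ.1
    have hm := hmono τ h hτs hτ.2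
    have h1 : Real.exp (lam * (h - τ)) * slope (S h x) ≤ slope (S τ x) := by
      have hp : 0 < Real.exp (lam * τ) := Real.exp_pos _
      rw [mul_sub, Real.exp_sub, div_mul_eq_mul_div, div_le_iff₀ hp]
      calc Real.exp (lam * h) * slope (S h x) ≤ Real.exp (lam * τ) * slope (S τ x) := hm
        _ = slope (S τ x) * Real.exp (lam * τ) := mul_comm _ _
    have h2 := pow_le_pow_left₀ (mul_nonneg (Real.exp_pos _).le (hslope0 _)) h1 2
    have h3 : Real.exp (2 * lam * (h - τ)) = (Real.exp (lam * (h - τ))) ^ 2 := by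
      rw [sq, ← Real.exp_add]; ring_nf
    calc Real.exp (2 * lam * (h - τ)) * C
        = (Real.exp (lam * (h - τ)) * slope (S h x)) ^ 2 := by rw [h3, mul_pow, hC]
      _ ≤ slope (S τ x) ^ 2 := h2
  have hInt1 := hint s h hs hsh'
  have hInt2 : IntervalIntegrable (fun τ => Real.exp (2 * lam * (h - τ)) * C) volume s h :=
    ((Real.continuous_exp.comp (by continuity)).mul continuous_const).intervalIntegrable s h
  have hmono_int := intervalIntegral.integral_mono_on hsh' hInt2 hInt1 key
  have hconst : (∫ τ in s..h, Real.exp (2 * lam * (h - τ)) * C)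
      = (∫ τ in s..h, Real.exp (2 * lam * (h - τ))) * C :=
    intervalIntegral.integral_mul_const _ _
  have hE := hdiss s h hs hsh'
  by_cases hlam : lam = 0
  · subst hlam
    rw [if_pos rfl]
    have hsimp : (∫ τ in s..h, Real.exp (2 * (0:ℝ) * (h - τ)) * C) = (h - s) * C := by
      simp [mul_comm]
    rw [hsimp] at hmono_int
    linarith
  · rw [if_neg hlam]
    have hc2 : (2 : ℝ) * lam ≠ 0 := mul_ne_zero two_ne_zero hlam
    have hval := exp_int_aux (2 * lam) s h hc2
    rw [hconst, hval] at hmono_int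
    have hring : (1 / (2 * lam)) * (1 - Real.exp (2 * lam * (h - s))) * C
        = -((Real.exp (2 * lam * (h - s)) - 1) / (2 * lam) * C) := by ring
    linarith
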